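/- arXiv:1406.4904 — 5 statements merged into one kernel-verified Lean document; each statement's English description precedes it below -/
import Mathlib

section
/- Suppose u satisfies Condition 2.1 with constant K. Let Z = (z_1,…,z_N) be a finite list of points of ℝ^p and suppose an M-estimate of scatter V for Z about t exists. Then for every linear subspace S of ℝ^p with 0 ≤ dim S ≤ p−1, the fraction of indices i ∈ {1,…,N} with z_i − t ∈ S is at most 1 − (p − dim S)/K. -/
open Matrix Finset Filter

noncomputable section

/-- Condition 2.1 with constant `K`: `u` is nonnegative, non-increasing and continuous on
`(0,∞)`; `ψ(s) = s·u(s)` is non-decreasing, strictly increasing wherever `ψ(s) < K`,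
and `K = sup_{s>0} ψ(s)` (in particular `ψ` is bounded); and `K > p`. -/
structure Cond21 (p : ℕ) (u : ℝ → ℝ) (K : ℝ) : Prop where
  nonneg : ∀ ⦃s : ℝ⦄, 0 < s → 0 ≤ u s
  antitone : ∀ ⦃s₁ s₂ : ℝ⦄, 0 < s₁ → s₁ ≤ s₂ → u s₂ ≤ u s₁
  cont : ContinuousOn u (Set.Ioi 0)
  psi_mono : ∀ ⦃s₁ s₂ : ℝ⦄, 0 < s₁ → s₁ ≤ s₂ → s₁ * u s₁ ≤ s₂ * u s₂
  psi_strictMono : ∀ ⦃s₁ s₂ : ℝ⦄, 0 < s₁ → s₁ < s₂ → s₁ * u s₁ < K → s₁ * u s₁ < s₂ * u s₂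
  psi_lub : IsLUB {y : ℝ | ∃ s : ℝ, 0 < s ∧ y = s * u s} K
  K_gt_p : (p : ℝ) < K

/-- `V` is an M-estimate of scatter for the list `z` about the center `t`:
`V` is positive definite (hence symmetric) and satisfies
`V = (1/N) Σᵢ u(sᵢ) (zᵢ - t)(zᵢ - t)ᵀ` with `sᵢ = (zᵢ - t)ᵀ V⁻¹ (zᵢ - t)`,
the `i`-th summand being the zero matrix when `zᵢ = t`. -/
def IsScatterMEstimate {p N : ℕ} (u : ℝ → ℝ) (t : Fin p → ℝ)
    (z : Fin N → Fin p → ℝ) (V : Matrix (Fin p) (Fin p) ℝ) : Prop :=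
  V.PosDef ∧
    V = (N : ℝ)⁻¹ • ∑ i : Fin N,
      if z i = t then (0 : Matrix (Fin p) (Fin p) ℝ)
      else u ((z i - t) ⬝ᵥ (V⁻¹ *ᵥ (z i - t))) • Matrix.vecMulVec (z i - t) (z i - t)

/-- A list of points of `ℝᵖ` is in general position about `t` if any `p` of the
differences (point − t), taken with distinct indices, are linearly independent. -/
def GenPosAbout {p n : ℕ} (t : Fin p → ℝ) (x : Fin n → Fin p → ℝ) : Prop :=
  ∀ f : Fin p → Fin n, Function.Injective f →
    LinearIndependent ℝ (fun j : Fin p => x (f j) - t)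

/-- Squared Euclidean distance from `t` to `z`. -/
def sqDist {p : ℕ} (t z : Fin p → ℝ) : ℝ := (z - t) ⬝ᵥ (z - t)

/-- The unit direction `θ(z) = (z - t)/‖z - t‖` (Euclidean norm). -/
def dirFrom {p : ℕ} (t z : Fin p → ℝ) : Fin p → ℝ :=
  (Real.sqrt (sqDist t z))⁻¹ • (z - t)

/-- `Y ∈ C_{1,ρ,m}(X)`: for every choice of `p` points of `Z = X ∪ Y` with distinct
indices, all different from `t`, the smallest eigenvalue of `Σⱼ θ(z_{i(j)})θ(z_{i(j)})ᵀ`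
exceeds `ρ`; this is expressed via the Rayleigh quotient characterization of the
smallest eigenvalue of a symmetric matrix. -/
def InC1 {p n m : ℕ} (ρ : ℝ) (t : Fin p → ℝ) (X : Fin n → Fin p → ℝ)
    (Y : Fin m → Fin p → ℝ) : Prop :=
  ∀ f : Fin p → Fin (n + m), Function.Injective f →
    (∀ j, Fin.append X Y (f j) ≠ t) →
    ∀ v : Fin p → ℝ, v ⬝ᵥ v = 1 →
      ρ < v ⬝ᵥ ((∑ j : Fin p,
        Matrix.vecMulVec (dirFrom t (Fin.append X Y (f j)))
          (dirFrom t (Fin.append X Y (f j)))) *ᵥ v)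

/-- `Y ∈ C_{2,r,m}(X)`: every contaminating point satisfies `‖yᵢ - t‖² > r`. -/
def InC2 {p m : ℕ} (r : ℝ) (t : Fin p → ℝ) (Y : Fin m → Fin p → ℝ) : Prop :=
  ∀ i : Fin m, r < sqDist t (Y i)

/-- `Y ∈ C_{3,B,m}(X)`: every contaminating point satisfies `‖yᵢ - t‖² < B`. -/
def InC3 {p m : ℕ} (B : ℝ) (t : Fin p → ℝ) (Y : Fin m → Fin p → ℝ) : Prop :=
  ∀ i : Fin m, sqDist t (Y i) < B


section ScatterAux

lemma dot_mulVec_trans' {p : ℕ} (M : Matrix (Fin p) (Fin p) ℝ) (a b : Fin p → ℝ) :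
    a ⬝ᵥ (M *ᵥ b) = (Mᵀ *ᵥ a) ⬝ᵥ b := by
  rw [Matrix.dotProduct_mulVec, ← Matrix.mulVec_transpose]

lemma vecMulVec_mulVec' {p : ℕ} (a b c : Fin p → ℝ) :
    Matrix.vecMulVec a b *ᵥ c = (b ⬝ᵥ c) • a := by
  ext i
  simp only [Matrix.mulVec, Matrix.vecMulVec_apply, dotProduct, Pi.smul_apply,
    smul_eq_mul, Finset.sum_mul]
  exact Finset.sum_congr rfl fun j _ => by ring

lemma dot_sum_right' {p n : ℕ} (r : Fin p → ℝ) (v : Fin n → Fin p → ℝ) :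
    r ⬝ᵥ (∑ i, v i) = ∑ i, r ⬝ᵥ v i := by
  simp only [dotProduct, Finset.sum_apply, Finset.mul_sum]
  rw [Finset.sum_comm]

lemma sum_mulVec' {p n : ℕ} (M : Fin n → Matrix (Fin p) (Fin p) ℝ) (r : Fin p → ℝ) :
    (∑ i, M i) *ᵥ r = ∑ i, M i *ᵥ r := by
  ext j
  rw [Finset.sum_apply]
  simp only [Matrix.mulVec, dotProduct, Matrix.sum_apply, Finset.sum_apply,
    Finset.sum_mul]
  rw [Finset.sum_comm]

lemma quad_term' {p : ℕ} (c : ℝ) (a r : Fin p → ℝ) :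
    r ⬝ᵥ ((c • Matrix.vecMulVec a a) *ᵥ r) = c * (a ⬝ᵥ r) ^ 2 := by
  rw [Matrix.smul_mulVec, vecMulVec_mulVec']
  simp only [dotProduct_smul, smul_eq_mul, smul_smul]
  rw [dotProduct_comm r a]
  ring

lemma euclid_inner_eq_dot' {p : ℕ} (a c : Fin p → ℝ) :
    (inner ℝ (WithLp.toLp 2 a : EuclideanSpace ℝ (Fin p)) (WithLp.toLp 2 c)) = a ⬝ᵥ c := by
  rw [EuclideanSpace.inner_eq_star_dotProduct]
  simp only [star_trivial, WithLp.ofLp_toLp]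
  exact dotProduct_comm _ _

lemma bessel_dot' {p m : ℕ} (Q : Fin m → EuclideanSpace ℝ (Fin p))
    (hQon : Orthonormal ℝ Q) (v : Fin p → ℝ) :
    ∑ k : Fin m, (v ⬝ᵥ (Q k : Fin p → ℝ)) ^ 2 ≤ v ⬝ᵥ v := by
  let xE : EuclideanSpace ℝ (Fin p) := WithLp.toLp 2 v
  have hb := hQon.sum_inner_products_le (x := xE) (s := Finset.univ)
  have hnorm : ‖xE‖ ^ 2 = v ⬝ᵥ v := by
    rw [← real_inner_self_eq_norm_sq]
    exact euclid_inner_eq_dot' v v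
  rw [hnorm] at hb
  refine le_trans (le_of_eq ?_) hb
  refine Finset.sum_congr rfl fun k _ => ?_
  rw [show (inner ℝ (Q k) xE : ℝ) = (Q k : Fin p → ℝ) ⬝ᵥ v from euclid_inner_eq_dot' _ v] at *
  rw [dotProduct_comm, Real.norm_eq_abs, sq_abs]

end ScatterAux

/-- Lemma 2.1.ii (necessity): if an M-estimate of scatter `V` for `Z` about `t` exists,
then for every linear subspace `S` of `ℝᵖ` with `dim S ≤ p - 1`, the fraction of
indices `i` with `zᵢ - t ∈ S` is at most `1 - (p - dim S)/K`. -/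
theorem statement0 (p N : ℕ) (hp : 1 ≤ p) (t : Fin p → ℝ) (u : ℝ → ℝ) (K : ℝ)
    (hu : Cond21 p u K) (z : Fin N → Fin p → ℝ)
    (V : Matrix (Fin p) (Fin p) ℝ) (hV : IsScatterMEstimate u t z V)
    (S : Submodule ℝ (Fin p → ℝ)) (hS : Module.finrank ℝ S ≤ p - 1) :
    (Nat.card {i : Fin N // z i - t ∈ S} : ℝ) / N
      ≤ 1 - ((p : ℝ) - (Module.finrank ℝ S : ℝ)) / K := by
    classical
  obtain ⟨hpd, hVeq⟩ := hV
  have hKpos : (0 : ℝ) < K := lt_of_le_of_lt (Nat.cast_nonneg p) hu.K_gt_p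
  have hNep : Nonempty (Fin p) := ⟨⟨0, hp⟩⟩
  rcases Nat.eq_zero_or_pos N with hN | hN
  · exfalso
    subst hN
    have hV0 : V = 0 := by simpa using hVeq
    have := hpd.det_pos
    rw [hV0, Matrix.det_zero] at this
    exact lt_irrefl _ this
  have hNpos : (0 : ℝ) < N := by exact_mod_cast hN
  -- matrix square root setup
  have hps := hpd.posSemidef
  open scoped MatrixOrder in
  set W : Matrix (Fin p) (Fin p) ℝ := CFC.sqrt V with hWdef
  open scoped MatrixOrder in
  have hWV : W * W = V := CFC.sqrt_mul_sqrt_self V hps.nonneg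
  open scoped MatrixOrder in
  have hWsym : Wᵀ = W := by
    have h := (CFC.sqrt_nonneg V).posSemidef.1
    rwa [Matrix.IsHermitian, Matrix.conjTranspose_eq_transpose_of_trivial] at h
  have hWdet : IsUnit W.det := by
    refine isUnit_iff_ne_zero.2 fun h => hpd.det_pos.ne' ?_
    rw [← hWV, Matrix.det_mul, h, mul_zero]
  have hWiW : W * W⁻¹ = 1 := Matrix.mul_nonsing_inv W hWdet
  have hWinvsym : W⁻¹ᵀ = W⁻¹ := by rw [Matrix.transpose_nonsing_inv, hWsym]
  have hVinv : V⁻¹ = W⁻¹ * W⁻¹ := by rw [← hWV, Matrix.mul_inv_rev]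
  have hsx : ∀ i : Fin N, (z i - t) ⬝ᵥ (V⁻¹ *ᵥ (z i - t))
      = (W⁻¹ *ᵥ (z i - t)) ⬝ᵥ (W⁻¹ *ᵥ (z i - t)) := by
    intro i
    rw [hVinv, ← Matrix.mulVec_mulVec, dot_mulVec_trans', hWinvsym]
  have hID : ∀ r : Fin p → ℝ, r ⬝ᵥ (V *ᵥ r)
      = (N : ℝ)⁻¹ * ∑ i, (if z i = t then 0
          else u ((z i - t) ⬝ᵥ (V⁻¹ *ᵥ (z i - t))) * ((z i - t) ⬝ᵥ r) ^ 2) := by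
    intro r
    conv_lhs => rw [hVeq]
    rw [Matrix.smul_mulVec, dotProduct_smul, smul_eq_mul, sum_mulVec',
      dot_sum_right']
    congr 1
    refine Finset.sum_congr rfl fun i _ => ?_
    split_ifs with h
    · simp
    · exact quad_term' _ _ _
  have hQ : ∀ q : Fin p → ℝ, q ⬝ᵥ q
      = (N : ℝ)⁻¹ * ∑ i, (if z i = t then 0
          else u ((z i - t) ⬝ᵥ (V⁻¹ *ᵥ (z i - t))) * ((W⁻¹ *ᵥ (z i - t)) ⬝ᵥ q) ^ 2) := by
    intro q
    have h1 := hID (W⁻¹ *ᵥ q)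
    have hL : (W⁻¹ *ᵥ q) ⬝ᵥ (V *ᵥ (W⁻¹ *ᵥ q)) = q ⬝ᵥ q := by
      rw [Matrix.mulVec_mulVec, ← hWV, Matrix.mul_assoc, hWiW, Matrix.mul_one,
        dot_mulVec_trans', hWsym, Matrix.mulVec_mulVec, hWiW, Matrix.one_mulVec]
    rw [hL] at h1
    rw [h1]
    congr 1
    refine Finset.sum_congr rfl fun i _ => ?_
    congr 2
    rw [dot_mulVec_trans', hWinvsym]
  -- Euclidean geometry setup
  let L : (Fin p → ℝ) →ₗ[ℝ] EuclideanSpace ℝ (Fin p) :=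
    { toFun := fun v => WithLp.toLp 2 (W⁻¹ *ᵥ v)
      map_add' := fun a b => by simp [Matrix.mulVec_add]
      map_smul' := fun c a => by simp [Matrix.mulVec_smul] }
  let T : Submodule ℝ (EuclideanSpace ℝ (Fin p)) := S.map L
  have hTle : Module.finrank ℝ T ≤ Module.finrank ℝ S := Submodule.finrank_map_le L S
  have hdim : Module.finrank ℝ T + Module.finrank ℝ ↥Tᗮ = p := by
    rw [Submodule.finrank_add_finrank_orthogonal]
    exact finrank_euclideanSpace_fin
  set m := Module.finrank ℝ ↥Tᗮ with hmdef
  let b := stdOrthonormalBasis ℝ ↥Tᗮ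
  let Q : Fin m → EuclideanSpace ℝ (Fin p) := fun k => (b k : EuclideanSpace ℝ (Fin p))
  have hQon : Orthonormal ℝ Q := by
    have hbo := b.orthonormal
    rw [orthonormal_iff_ite] at hbo ⊢
    intro k l
    have h := hbo k l
    rwa [Submodule.coe_inner] at h
  have hQmem : ∀ k, Q k ∈ Tᗮ := fun k => (b k).2
  have hQunit : ∀ k, (Q k : Fin p → ℝ) ⬝ᵥ (Q k : Fin p → ℝ) = 1 := by
    intro k
    rw [← euclid_inner_eq_dot']
    rw [orthonormal_iff_ite] at hQon
    simpa using hQon k k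
  -- counting set
  set A : Finset (Fin N) := Finset.univ.filter (fun i => z i - t ∈ S) with hAdef
  have hNatcard : (Nat.card {i : Fin N // z i - t ∈ S}) = A.card := by
    rw [Nat.card_eq_fintype_card]
    exact Fintype.card_subtype _
  have hAle : A.card ≤ N := by
    calc A.card ≤ Finset.univ.card := Finset.card_filter_le _ _
    _ = N := Finset.card_fin N
  -- per-index bound
  have hbound : ∀ i : Fin N,
      (∑ k : Fin m, (if z i = t then 0
        else u ((z i - t) ⬝ᵥ (V⁻¹ *ᵥ (z i - t))) * ((W⁻¹ *ᵥ (z i - t)) ⬝ᵥ Q k) ^ 2))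
      ≤ (if z i - t ∈ S then 0 else K) := by
    intro i
    by_cases hiS : z i - t ∈ S
    · rw [if_pos hiS]
      refine le_of_eq (Finset.sum_eq_zero fun k _ => ?_)
      by_cases hz : z i = t
      · rw [if_pos hz]
      · rw [if_neg hz]
        have hxT : (WithLp.toLp 2 (W⁻¹ *ᵥ (z i - t)) : EuclideanSpace ℝ (Fin p)) ∈ T :=
          ⟨z i - t, hiS, rfl⟩
        have h0 : (W⁻¹ *ᵥ (z i - t)) ⬝ᵥ (Q k : Fin p → ℝ) = 0 := by
          rw [← euclid_inner_eq_dot']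
          exact (Submodule.mem_orthogonal T (Q k)).1 (hQmem k) _ hxT
        rw [h0]
        ring
    · rw [if_neg hiS]
      have hzt : z i ≠ t := by
        intro h
        exact hiS (by rw [h, sub_self]; exact S.zero_mem)
      have hxne : W⁻¹ *ᵥ (z i - t) ≠ 0 := by
        intro h
        apply hiS
        have h2 : z i - t = 0 := by
          have h3 := congrArg (fun v => W *ᵥ v) h
          simpa [Matrix.mulVec_mulVec, hWiW, Matrix.one_mulVec] using h3
        rw [h2]
        exact S.zero_mem
      set σ : ℝ := (z i - t) ⬝ᵥ (V⁻¹ *ᵥ (z i - t)) with hσdef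
      have hσx : σ = (W⁻¹ *ᵥ (z i - t)) ⬝ᵥ (W⁻¹ *ᵥ (z i - t)) := hsx i
      have hσpos : 0 < σ := by
        rw [hσx]
        have h0 : (0 : ℝ) ≤ (W⁻¹ *ᵥ (z i - t)) ⬝ᵥ (W⁻¹ *ᵥ (z i - t)) :=
          Finset.sum_nonneg fun j _ => mul_self_nonneg _
        refine lt_of_le_of_ne h0 fun h => hxne ?_
        exact dotProduct_self_eq_zero.1 h.symm
      have hbes : ∑ k : Fin m, ((W⁻¹ *ᵥ (z i - t)) ⬝ᵥ (Q k : Fin p → ℝ)) ^ 2 ≤ σ := by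
        rw [hσx]
        exact bessel_dot' Q hQon _
      have hψ : σ * u σ ≤ K := hu.psi_lub.1 ⟨σ, hσpos, rfl⟩
      calc ∑ k : Fin m, (if z i = t then 0 else u σ * ((W⁻¹ *ᵥ (z i - t)) ⬝ᵥ Q k) ^ 2)
          = u σ * ∑ k : Fin m, ((W⁻¹ *ᵥ (z i - t)) ⬝ᵥ (Q k : Fin p → ℝ)) ^ 2 := by
            rw [Finset.mul_sum]
            exact Finset.sum_congr rfl fun k _ => by rw [if_neg hzt]
        _ ≤ u σ * σ := mul_le_mul_of_nonneg_left hbes (hu.nonneg hσpos)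
        _ = σ * u σ := mul_comm _ _
        _ ≤ K := hψ
  -- sum up
  have hsum_ite : (∑ i : Fin N, (if z i - t ∈ S then (0 : ℝ) else K))
      = K * ((N : ℝ) - A.card) := by
    have hcc : A.card + (Finset.univ.filter (fun i : Fin N => ¬ z i - t ∈ S)).card = N := by
      rw [hAdef]
      have := Finset.card_filter_add_card_filter_not
        (s := (Finset.univ : Finset (Fin N))) (p := fun i => z i - t ∈ S)
      simpa using this
    have hccR : ((Finset.univ.filter (fun i : Fin N => ¬ z i - t ∈ S)).card : ℝ)
        = (N : ℝ) - A.card := by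
      have h := congrArg (Nat.cast (R := ℝ)) hcc
      push_cast at h
      linarith
    rw [Finset.sum_ite, Finset.sum_const, Finset.sum_const]
    simp only [smul_zero, zero_add, nsmul_eq_mul]
    rw [hccR]
    ring
  have key : (m : ℝ) ≤ (N : ℝ)⁻¹ * (K * ((N : ℝ) - A.card)) := by
    have hm1 : (m : ℝ) = ∑ k : Fin m, (Q k : Fin p → ℝ) ⬝ᵥ (Q k : Fin p → ℝ) := by
      simp [hQunit]
    rw [hm1]
    calc (∑ k : Fin m, (Q k : Fin p → ℝ) ⬝ᵥ (Q k : Fin p → ℝ))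
        = ∑ k : Fin m, (N : ℝ)⁻¹ * ∑ i, (if z i = t then 0
            else u ((z i - t) ⬝ᵥ (V⁻¹ *ᵥ (z i - t))) * ((W⁻¹ *ᵥ (z i - t)) ⬝ᵥ Q k) ^ 2) :=
          Finset.sum_congr rfl fun k _ => hQ (Q k)
      _ = (N : ℝ)⁻¹ * ∑ i : Fin N, ∑ k : Fin m, (if z i = t then 0
            else u ((z i - t) ⬝ᵥ (V⁻¹ *ᵥ (z i - t))) * ((W⁻¹ *ᵥ (z i - t)) ⬝ᵥ Q k) ^ 2) := by
          rw [← Finset.mul_sum, Finset.sum_comm]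
      _ ≤ (N : ℝ)⁻¹ * ∑ i : Fin N, (if z i - t ∈ S then 0 else K) := by
          refine mul_le_mul_of_nonneg_left ?_ (inv_nonneg.2 hNpos.le)
          exact Finset.sum_le_sum fun i _ => hbound i
      _ = (N : ℝ)⁻¹ * (K * ((N : ℝ) - A.card)) := by rw [hsum_ite]
  -- finishing arithmetic
  have hc1 : (Module.finrank ℝ T : ℝ) + (m : ℝ) = (p : ℝ) := by exact_mod_cast hdim
  have hc2 : (Module.finrank ℝ T : ℝ) ≤ (Module.finrank ℝ S : ℝ) := by exact_mod_cast hTle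
  have h1 : (p : ℝ) - (Module.finrank ℝ S : ℝ) ≤ (m : ℝ) := by linarith
  have h2 : (p : ℝ) - (Module.finrank ℝ S : ℝ) ≤ (N : ℝ)⁻¹ * (K * ((N : ℝ) - A.card)) :=
    h1.trans key
  have h3 : ((p : ℝ) - (Module.finrank ℝ S : ℝ)) * N ≤ K * ((N : ℝ) - A.card) := by
    have h4 := mul_le_mul_of_nonneg_right h2 hNpos.le
    calc ((p : ℝ) - (Module.finrank ℝ S : ℝ)) * N
        ≤ ((N : ℝ)⁻¹ * (K * ((N : ℝ) - A.card))) * N := h4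
      _ = K * ((N : ℝ) - A.card) := by field_simp
  have hcardeq : ((Nat.card {i : Fin N // z i - t ∈ S}) : ℝ) = (A.card : ℝ) := by
    exact_mod_cast hNatcard
  rw [hcardeq, div_le_iff₀ hNpos]
  have h5 : ((p : ℝ) - (Module.finrank ℝ S : ℝ)) / K * N ≤ (N : ℝ) - A.card := by
    rw [div_mul_eq_mul_div, div_le_iff₀ hKpos]
    nlinarith [h3]
  have h6 : (1 - ((p : ℝ) - (Module.finrank ℝ S : ℝ)) / K) * N
      = N - ((p : ℝ) - (Module.finrank ℝ S : ℝ)) / K * N := by ring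
  rw [h6]
  linarith
end
end

section
/- (Theorem 3.1, breakdown by inliers at the center.) Suppose u satisfies Condition 2.1 with constant K and ε_m = m/(n+m) > 1 − p/K. Let Y = (t, t, …, t) consist of m copies of the center t. Then no M-estimate of scatter for the contaminated sample Z = X ∪ Y about t exists. -/
open Matrix Finset Filter

noncomputable section

lemma trace_mul_vecMulVec' {q : Type*} [Fintype q] [DecidableEq q]
    (A : Matrix q q ℝ) (w : q → ℝ) :
    Matrix.trace (A * Matrix.vecMulVec w w) = w ⬝ᵥ (A *ᵥ w) := by
  simp [Matrix.trace, Matrix.mul_apply, Matrix.vecMulVec_apply, Matrix.diag, dotProduct,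
    Matrix.mulVec, Finset.mul_sum]
  exact Finset.sum_congr rfl fun i _ => Finset.sum_congr rfl fun j _ => by ring

/-- Theorem 3.1 (breakdown by inliers at the center): if `ε_m = m/(n+m) > 1 - p/K` and
`Y` consists of `m` copies of the center `t`, then no M-estimate of scatter for
`Z = X ∪ Y` about `t` exists. -/
theorem statement9 (p n m : ℕ) (hp : 1 ≤ p) (hm : 1 ≤ m) (hn : p * (p - 1) < n)
    (t : Fin p → ℝ) (u : ℝ → ℝ) (K : ℝ) (hu : Cond21 p u K)
    (X : Fin n → Fin p → ℝ) (hX : GenPosAbout t X)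
    (heps : 1 - (p : ℝ) / K < (m : ℝ) / ((n : ℝ) + m)) :
    ¬ ∃ V : Matrix (Fin p) (Fin p) ℝ,
      IsScatterMEstimate u t (Fin.append X (fun _ : Fin m => t)) V := by
  rintro ⟨V, hpd, heq⟩
  have hKpos : (0 : ℝ) < K := lt_of_le_of_lt (by positivity) hu.K_gt_p
  have hmpos : (0 : ℝ) < (m : ℝ) := by exact_mod_cast hm
  have hNpos : (0 : ℝ) < (n : ℝ) + m := by positivity
  have hnp : p ≤ n := by
    have h1 : p - 1 ≤ p * (p - 1) := Nat.le_mul_of_pos_left _ hp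
    omega
  -- each X i ≠ t
  have hxne : ∀ i : Fin n, X i ≠ t := by
    intro i hit
    have he : Function.Injective (Fin.castLE hnp) := Fin.castLE_injective hnp
    set f : Fin p → Fin n :=
      (Equiv.swap (Fin.castLE hnp ⟨0, hp⟩) i) ∘ (Fin.castLE hnp) with hf
    have hfi : Function.Injective f := (Equiv.injective _).comp he
    have hli := hX f hfi
    have h0 := hli.ne_zero ⟨0, hp⟩
    apply h0
    have : f ⟨0, hp⟩ = i := by simp [hf]
    rw [this, hit, sub_self]
  have hdet : IsUnit V.det := isUnit_iff_ne_zero.mpr hpd.det_pos.ne'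
  have hVinv : (V⁻¹).PosDef := hpd.inv
  set s : Fin n → ℝ := fun i => (X i - t) ⬝ᵥ (V⁻¹ *ᵥ (X i - t)) with hs
  have hspos : ∀ i, 0 < s i := by
    intro i
    have hne : X i - t ≠ 0 := sub_ne_zero.mpr (hxne i)
    have := hVinv.dotProduct_mulVec_pos hne
    simpa [hs, dotProduct, Matrix.mulVec] using this
  have hpsile : ∀ i : Fin n, u (s i) * s i ≤ K := by
    intro i
    have := hu.psi_lub.1 ⟨s i, hspos i, rfl⟩
    linarith [this, mul_comm (s i) (u (s i))]
  -- trace identity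
  have h1 : Matrix.trace (V⁻¹ * V) = (p : ℝ) := by
    rw [Matrix.nonsing_inv_mul _ hdet, Matrix.trace_one]
    simp
  have h2 : Matrix.trace (V⁻¹ * V)
      = ((n : ℝ) + m)⁻¹ * ∑ i : Fin n, u (s i) * s i := by
    nth_rewrite 2 [heq]
    rw [Matrix.mul_smul, Matrix.trace_smul, smul_eq_mul]
    push_cast
    congr 1
    rw [Finset.mul_sum, Matrix.trace_sum, Fin.sum_univ_add]
    have hYz : (∑ i : Fin m, Matrix.trace (V⁻¹ *
        (if Fin.append X (fun _ : Fin m => t) (Fin.natAdd n i) = t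
          then (0 : Matrix (Fin p) (Fin p) ℝ)
          else u ((Fin.append X (fun _ : Fin m => t) (Fin.natAdd n i) - t) ⬝ᵥ
              (V⁻¹ *ᵥ (Fin.append X (fun _ : Fin m => t) (Fin.natAdd n i) - t))) •
            Matrix.vecMulVec (Fin.append X (fun _ : Fin m => t) (Fin.natAdd n i) - t)
              (Fin.append X (fun _ : Fin m => t) (Fin.natAdd n i) - t)))) = 0 :=
      Finset.sum_eq_zero fun i _ => by rw [Fin.append_right]; simp
    rw [hYz, add_zero]
    refine Finset.sum_congr rfl fun i _ => ?_
    rw [Fin.append_left, if_neg (hxne i), Matrix.mul_smul, Matrix.trace_smul,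
      smul_eq_mul, trace_mul_vecMulVec']
  -- arithmetic contradiction
  have key : (n : ℝ) * K < p * ((n : ℝ) + m) := by
    have h' : (n : ℝ) / ((n : ℝ) + m) < (p : ℝ) / K := by
      have he : (n : ℝ) / ((n : ℝ) + m) = 1 - (m : ℝ) / ((n : ℝ) + m) := by
        field_simp
        ring
      rw [he]; linarith
    exact (div_lt_div_iff₀ hNpos hKpos).mp h'
  have hsum : ∑ i : Fin n, u (s i) * s i ≤ (n : ℝ) * K := by
    calc ∑ i : Fin n, u (s i) * s i ≤ ∑ _i : Fin n, K :=
          Finset.sum_le_sum fun i _ => hpsile i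
      _ = (n : ℝ) * K := by simp [Finset.sum_const, mul_comm]
  have hfin : (p : ℝ) < p := by
    have h3 : (p : ℝ) = ((n : ℝ) + m)⁻¹ * ∑ i : Fin n, u (s i) * s i := by
      rw [← h2, h1]
    have h4 : ((n : ℝ) + m)⁻¹ * ∑ i : Fin n, u (s i) * s i
        ≤ ((n : ℝ) + m)⁻¹ * ((n : ℝ) * K) :=
      mul_le_mul_of_nonneg_left hsum (by positivity)
    have h5 : ((n : ℝ) + m)⁻¹ * ((n : ℝ) * K)
        < ((n : ℝ) + m)⁻¹ * ((p : ℝ) * ((n : ℝ) + m)) :=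
      mul_lt_mul_of_pos_left key (by positivity)
    have h6 : ((n : ℝ) + m)⁻¹ * ((p : ℝ) * ((n : ℝ) + m)) = p := by
      field_simp
    linarith [h3, h4, h5, h6.le]
  exact absurd hfin (lt_irrefl _)
end
end

section
/- (Theorem 3.1, breakdown by a distant coplanar point mass.) Suppose u satisfies Condition 2.1 with constant K and ε_m = m/(n+m) ≥ 1/K. Fix a unit vector θ ∈ ℝ^p and for r > 0 let Y_r consist of m copies of the point t + rθ. Then there is no constant C < ∞ such that for every r > 0 an M-estimate of scatter V_r for X ∪ Y_r about t exists with trace(V_r) + trace(V_r⁻¹) ≤ C. In particular, taking m = 1, breakdown occurs when n + 1 ≤ K. -/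
open Matrix Finset Filter

noncomputable section

open scoped MatrixOrder in
/-- Square root of a positive semidefinite real matrix. -/
def Matrix.PosSemidef.sqrt {p : ℕ} {M : Matrix (Fin p) (Fin p) ℝ} (_hM : M.PosSemidef) :
    Matrix (Fin p) (Fin p) ℝ := CFC.sqrt M

open scoped MatrixOrder in
lemma Matrix.PosSemidef.sqrt_mul_self {p : ℕ} {M : Matrix (Fin p) (Fin p) ℝ} (hM : M.PosSemidef) :
    hM.sqrt * hM.sqrt = M := CFC.sqrt_mul_sqrt_self M hM.nonneg

open scoped MatrixOrder in
lemma Matrix.PosSemidef.posSemidef_sqrt {p : ℕ} {M : Matrix (Fin p) (Fin p) ℝ}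
    (hM : M.PosSemidef) : hM.sqrt.PosSemidef := (CFC.sqrt_nonneg M).posSemidef

namespace BreakAux

variable {p : ℕ}

lemma dot_sq_le (a b : Fin p → ℝ) : (a ⬝ᵥ b) ^ 2 ≤ (a ⬝ᵥ a) * (b ⬝ᵥ b) := by
  have := Finset.sum_mul_sq_le_sq_mul_sq Finset.univ a b
  simpa [dotProduct, sq] using this

lemma vmv_mulVec (a b w : Fin p → ℝ) : Matrix.vecMulVec a b *ᵥ w = (b ⬝ᵥ w) • a := by
  ext i
  simp [Matrix.mulVec, Matrix.vecMulVec_apply, dotProduct, Finset.mul_sum, mul_comm, mul_assoc,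
    mul_left_comm]

lemma sum_mulVec' {ι : Type*} (s : Finset ι) (M : ι → Matrix (Fin p) (Fin p) ℝ) (w : Fin p → ℝ) :
    (∑ i ∈ s, M i) *ᵥ w = ∑ i ∈ s, (M i *ᵥ w) :=
  map_sum (Matrix.mulVec.addMonoidHomLeft w) M s

lemma dot_sum' {ι : Type*} (s : Finset ι) (f : ι → Fin p → ℝ) (w : Fin p → ℝ) :
    w ⬝ᵥ (∑ i ∈ s, f i) = ∑ i ∈ s, w ⬝ᵥ f i := by
  simp only [dotProduct, Finset.sum_apply, Finset.mul_sum]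
  exact Finset.sum_comm

lemma sum_dot' {ι : Type*} (s : Finset ι) (f : ι → Fin p → ℝ) (w : Fin p → ℝ) :
    (∑ i ∈ s, f i) ⬝ᵥ w = ∑ i ∈ s, f i ⬝ᵥ w := by
  rw [dotProduct_comm, dot_sum']
  exact Finset.sum_congr rfl fun i _ => dotProduct_comm _ _

lemma quad_term (a w : Fin p → ℝ) (cst : ℝ) :
    w ⬝ᵥ ((cst • Matrix.vecMulVec a a) *ᵥ w) = cst * (a ⬝ᵥ w) ^ 2 := by
  rw [Matrix.smul_mulVec, vmv_mulVec, dotProduct_smul, dotProduct_smul]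
  rw [dotProduct_comm w a]
  rw [smul_eq_mul, smul_eq_mul]; ring

lemma gram_quad {n : ℕ} (a : Fin n → Fin p → ℝ) (w : Fin p → ℝ) :
    w ⬝ᵥ ((∑ i : Fin n, Matrix.vecMulVec (a i) (a i)) *ᵥ w) = ∑ i : Fin n, (a i ⬝ᵥ w) ^ 2 := by
  rw [sum_mulVec', dot_sum']
  refine Finset.sum_congr rfl fun i _ => ?_
  rw [vmv_mulVec, dotProduct_smul, dotProduct_comm w (a i), smul_eq_mul, sq]

lemma transpose_eq {M : Matrix (Fin p) (Fin p) ℝ} (hM : M.IsHermitian) : Mᵀ = M := by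
  rw [← Matrix.conjTranspose_eq_transpose_of_trivial]; exact hM

lemma dot_mulVec_symm {M : Matrix (Fin p) (Fin p) ℝ} (hM : M.IsHermitian) (x y : Fin p → ℝ) :
    x ⬝ᵥ (M *ᵥ y) = (M *ᵥ x) ⬝ᵥ y := by
  rw [Matrix.dotProduct_mulVec, ← Matrix.mulVec_transpose, transpose_eq hM]

lemma quad_eq_sq {M : Matrix (Fin p) (Fin p) ℝ} (hM : M.PosSemidef) (x : Fin p → ℝ) :
    x ⬝ᵥ (M *ᵥ x) = (hM.sqrt *ᵥ x) ⬝ᵥ (hM.sqrt *ᵥ x) := by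
  conv_lhs => rw [← hM.sqrt_mul_self]
  rw [← Matrix.mulVec_mulVec, dot_mulVec_symm (hM.posSemidef_sqrt).1]

lemma bilin_eq {M : Matrix (Fin p) (Fin p) ℝ} (hM : M.PosSemidef) (x y : Fin p → ℝ) :
    x ⬝ᵥ (M *ᵥ y) = (hM.sqrt *ᵥ x) ⬝ᵥ (hM.sqrt *ᵥ y) := by
  conv_lhs => rw [← hM.sqrt_mul_self]
  rw [← Matrix.mulVec_mulVec, dot_mulVec_symm (hM.posSemidef_sqrt).1]

lemma psd_cs {M : Matrix (Fin p) (Fin p) ℝ} (hM : M.PosSemidef) (x y : Fin p → ℝ) :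
    (x ⬝ᵥ (M *ᵥ y)) ^ 2 ≤ (x ⬝ᵥ (M *ᵥ x)) * (y ⬝ᵥ (M *ᵥ y)) := by
  rw [bilin_eq hM, quad_eq_sq hM, quad_eq_sq hM]
  exact dot_sq_le _ _

lemma quad_le_trace {M : Matrix (Fin p) (Fin p) ℝ} (hM : M.PosSemidef) (v : Fin p → ℝ) :
    v ⬝ᵥ (M *ᵥ v) ≤ M.trace * (v ⬝ᵥ v) := by
  set A := hM.sqrt with hA
  have hAherm : A.IsHermitian := (hM.posSemidef_sqrt).1
  rw [quad_eq_sq hM v]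
  have htr : M.trace = ∑ i : Fin p, ∑ j : Fin p, (A i j) ^ 2 := by
    conv_lhs => rw [← hM.sqrt_mul_self]
    rw [Matrix.trace]
    refine Finset.sum_congr rfl fun i _ => ?_
    simp only [Matrix.diag_apply, Matrix.mul_apply]
    refine Finset.sum_congr rfl fun j _ => ?_
    have : A j i = A i j := by
      have := congrFun (congrFun hAherm i) j
      simpa [Matrix.conjTranspose_apply] using this
    show A i j * A j i = A i j ^ 2
    rw [this, sq]
  rw [htr]
  have hstep : ∀ i : Fin p, ((A *ᵥ v) i) ^ 2 ≤ (∑ j : Fin p, (A i j) ^ 2) * (v ⬝ᵥ v) := by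
    intro i
    have := Finset.sum_mul_sq_le_sq_mul_sq Finset.univ (fun j => A i j) v
    simpa [Matrix.mulVec, dotProduct, sq] using this
  calc (A *ᵥ v) ⬝ᵥ (A *ᵥ v) = ∑ i : Fin p, ((A *ᵥ v) i) ^ 2 := by
        simp [dotProduct, sq]
    _ ≤ ∑ i : Fin p, (∑ j : Fin p, (A i j) ^ 2) * (v ⬝ᵥ v) := Finset.sum_le_sum fun i _ => hstep i
    _ = (∑ i : Fin p, ∑ j : Fin p, (A i j) ^ 2) * (v ⬝ᵥ v) := by rw [Finset.sum_mul]

lemma trace_pos' {M : Matrix (Fin p) (Fin p) ℝ} (hp : 0 < p) (hM : M.PosDef) : 0 < M.trace := by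
  have hdiag : ∀ i, 0 < M i i := by
    intro i
    have hne : (Pi.single i 1 : Fin p → ℝ) ≠ 0 := by
      intro h
      have := congrFun h i
      simp at this
    have h := hM.dotProduct_mulVec_pos hne
    have heq : (star (Pi.single i (1:ℝ))) ⬝ᵥ (M *ᵥ Pi.single i 1) = M i i := by
      simp [Matrix.mulVec, dotProduct, Pi.single_apply, mul_comm]
    rwa [heq] at h
  rw [Matrix.trace]
  exact Finset.sum_pos (fun i _ => hdiag i) ⟨⟨0, hp⟩, Finset.mem_univ _⟩

lemma dot_self_nonneg (v : Fin p → ℝ) : 0 ≤ v ⬝ᵥ v :=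
  Finset.sum_nonneg fun i _ => mul_self_nonneg (v i)

lemma dot_self_pos {v : Fin p → ℝ} (hv : v ≠ 0) : 0 < v ⬝ᵥ v :=
  lt_of_le_of_ne (dot_self_nonneg v) (Ne.symm (fun h => hv (dotProduct_self_eq_zero.mp h)))

lemma gram_exists_min (G : Matrix (Fin p) (Fin p) ℝ) (hG : G.PosDef)
    (θ : Fin p → ℝ) (hθ : θ ⬝ᵥ θ = 1) :
    ∃ c : ℝ, 0 < c ∧ ∀ w : Fin p → ℝ, c * (w ⬝ᵥ w) ≤ w ⬝ᵥ (G *ᵥ w) := by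
  have hcont : Continuous fun v : Fin p → ℝ => v ⬝ᵥ (G *ᵥ v) := by
    simp only [dotProduct, Matrix.mulVec]
    exact continuous_finset_sum _ fun i _ =>
      (continuous_apply i).mul (continuous_finset_sum _ fun j _ =>
        continuous_const.mul (continuous_apply j))
  have hcont2 : Continuous fun v : Fin p → ℝ => v ⬝ᵥ v := by
    simp only [dotProduct]
    exact continuous_finset_sum _ fun i _ => (continuous_apply i).mul (continuous_apply i)
  set S : Set (Fin p → ℝ) := {v | v ⬝ᵥ v = 1} with hS
  have hclosed : IsClosed S := isClosed_eq hcont2 continuous_const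
  have hbdd : S ⊆ Metric.closedBall 0 1 := by
    intro v hv
    rw [Metric.mem_closedBall, dist_zero_right]
    rw [pi_norm_le_iff_of_nonneg zero_le_one]
    intro i
    rw [Real.norm_eq_abs, abs_le_one_iff_mul_self_le_one]
    calc v i * v i ≤ v ⬝ᵥ v :=
          Finset.single_le_sum (fun j _ => mul_self_nonneg (v j)) (Finset.mem_univ i)
      _ = 1 := hv
  have hcompact : IsCompact S :=
    IsCompact.of_isClosed_subset (isCompact_closedBall 0 1) hclosed hbdd
  obtain ⟨v₀, hv₀S, hmin⟩ := hcompact.exists_isMinOn ⟨θ, hθ⟩ hcont.continuousOn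
  have hv₀ne : v₀ ≠ 0 := by
    intro h
    rw [h] at hv₀S
    simp [hS, dotProduct] at hv₀S
  refine ⟨v₀ ⬝ᵥ (G *ᵥ v₀), by simpa using hG.dotProduct_mulVec_pos hv₀ne, fun w => ?_⟩
  rcases eq_or_ne w 0 with rfl | hw
  · simp
  · have hww : 0 < w ⬝ᵥ w := dot_self_pos hw
    set l := Real.sqrt (w ⬝ᵥ w) with hl
    have hl0 : 0 < l := Real.sqrt_pos.mpr hww
    have hl2 : l * l = w ⬝ᵥ w := Real.mul_self_sqrt hww.le
    have hvS : (l⁻¹ • w) ∈ S := by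
      show (l⁻¹ • w) ⬝ᵥ (l⁻¹ • w) = 1
      rw [smul_dotProduct, dotProduct_smul, smul_eq_mul, smul_eq_mul, ← hl2]
      field_simp
    have h1 : v₀ ⬝ᵥ (G *ᵥ v₀) ≤ (l⁻¹ • w) ⬝ᵥ (G *ᵥ (l⁻¹ • w)) := hmin hvS
    have h2 : (l⁻¹ • w) ⬝ᵥ (G *ᵥ (l⁻¹ • w)) = l⁻¹ * (l⁻¹ * (w ⬝ᵥ (G *ᵥ w))) := by
      rw [Matrix.mulVec_smul, smul_dotProduct, dotProduct_smul,
        smul_eq_mul, smul_eq_mul]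
    rw [h2] at h1
    have h3 := mul_le_mul_of_nonneg_right h1 (mul_pos hl0 hl0).le
    have h4 : l⁻¹ * (l⁻¹ * (w ⬝ᵥ (G *ᵥ w))) * (l * l) = w ⬝ᵥ (G *ᵥ w) := by
      field_simp
    rw [h4, hl2] at h3
    exact h3

lemma gram_posdef {p n : ℕ} (hp0 : 0 < p) (hpn : p ≤ n) (t : Fin p → ℝ)
    (X : Fin n → Fin p → ℝ) (hX : GenPosAbout t X) :
    (∑ i : Fin n, Matrix.vecMulVec (X i - t) (X i - t)).PosDef := by
  refine Matrix.PosDef.of_dotProduct_mulVec_pos ?_ ?_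
  · show _ = _
    ext i j
    simp only [Matrix.conjTranspose_apply, Matrix.sum_apply, Matrix.vecMulVec_apply, star_trivial]
    exact Finset.sum_congr rfl fun k _ => mul_comm _ _
  · intro v hv
    rw [star_trivial, BreakAux.gram_quad]
    have hnn : (0:ℝ) ≤ ∑ i : Fin n, ((X i - t) ⬝ᵥ v) ^ 2 :=
      Finset.sum_nonneg fun i _ => sq_nonneg _
    rcases hnn.lt_or_eq with h | h
    · exact h
    · exfalso
      have hzero : ∀ i : Fin n, (X i - t) ⬝ᵥ v = 0 := by
        intro i
        have h0 := (Finset.sum_eq_zero_iff_of_nonneg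
          (fun i (_ : i ∈ Finset.univ) => sq_nonneg ((X i - t) ⬝ᵥ v))).mp h.symm i
          (Finset.mem_univ i)
        exact pow_eq_zero_iff two_ne_zero |>.mp h0
      have hli := hX (Fin.castLE hpn) (Fin.castLE_injective hpn)
      have hcard : Fintype.card (Fin p) = Module.finrank ℝ (Fin p → ℝ) := by
        simp [Module.finrank_fin_fun]
      haveI : Nonempty (Fin p) := ⟨⟨0, hp0⟩⟩
      let b := basisOfLinearIndependentOfCardEqFinrank hli hcard
      have hb : ⇑b = fun j : Fin p => X (Fin.castLE hpn j) - t :=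
        coe_basisOfLinearIndependentOfCardEqFinrank hli hcard
      have hbj : ∀ j : Fin p, (b j) ⬝ᵥ v = 0 := by
        intro j
        have hj : b j = X (Fin.castLE hpn j) - t := congrFun hb j
        rw [hj]
        exact hzero _
      have hvv : v ⬝ᵥ v = 0 := by
        have hrepr := b.sum_repr v
        calc v ⬝ᵥ v = (∑ j, b.repr v j • b j) ⬝ᵥ v := by rw [hrepr]
          _ = ∑ j, (b.repr v j • b j) ⬝ᵥ v := BreakAux.sum_dot' _ _ _
          _ = 0 := Finset.sum_eq_zero fun j _ => by
              rw [smul_dotProduct, hbj j, smul_zero]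
      exact hv (dotProduct_self_eq_zero.mp hvv)

end BreakAux

set_option maxHeartbeats 1000000

/-- Theorem 3.1 (breakdown by a distant coplanar point mass): if `ε_m = m/(n+m) ≥ 1/K`
and `Y_r` consists of `m` copies of `t + rθ` for a fixed unit vector `θ`, then there is
no constant `C` such that for every `r > 0` an M-estimate `V_r` for `X ∪ Y_r` about `t`
exists with `trace(V_r) + trace(V_r⁻¹) ≤ C`. -/
theorem statement10 (p n m : ℕ) (hp : 1 ≤ p) (hm : 1 ≤ m) (hn : p * (p - 1) < n)
    (t : Fin p → ℝ) (u : ℝ → ℝ) (K : ℝ) (hu : Cond21 p u K)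
    (X : Fin n → Fin p → ℝ) (hX : GenPosAbout t X)
    (θ : Fin p → ℝ) (hθ : θ ⬝ᵥ θ = 1)
    (heps : 1 / K ≤ (m : ℝ) / ((n : ℝ) + m)) :
    ¬ ∃ C : ℝ, ∀ r : ℝ, 0 < r →
      ∃ V : Matrix (Fin p) (Fin p) ℝ,
        IsScatterMEstimate u t (Fin.append X (fun _ : Fin m => t + r • θ)) V ∧
        V.trace + (V⁻¹).trace ≤ C := by
  rintro ⟨C, hC⟩
  classical
  have hp0 : 0 < p := hp
  have hpn : p ≤ n := by
    rcases Nat.lt_or_ge p 2 with h2 | h2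
    · have : p = 1 := by omega
      omega
    · calc p ≤ p * (p - 1) := Nat.le_mul_of_pos_right p (by omega)
        _ ≤ n := hn.le
  have hn0 : 0 < n := lt_of_lt_of_le hp0 hpn
  have hm0 : (0:ℝ) < m := by exact_mod_cast hm
  have hθ0 : θ ≠ 0 := by
    intro h
    rw [h] at hθ
    simp [dotProduct] at hθ
  have hXne : ∀ i : Fin n, X i - t ≠ 0 := by
    intro i
    have hfinj : Function.Injective
        (fun j : Fin p => Equiv.swap (Fin.castLE hpn ⟨0, hp0⟩) i (Fin.castLE hpn j)) :=
      (Equiv.injective _).comp (Fin.castLE_injective hpn)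
    have hli := hX _ hfinj
    have h0 := hli.ne_zero ⟨0, hp0⟩
    simpa [Equiv.swap_apply_left] using h0
  have hXnet : ∀ i : Fin n, X i ≠ t := by
    intro i h
    exact hXne i (by rw [h, sub_self])
  -- psi facts
  have hK0 : (0:ℝ) < K := lt_of_le_of_lt (by positivity) hu.K_gt_p
  have psi_pos : ∀ s : ℝ, 0 < s → 0 < s * u s := by
    intro s hs
    rcases (mul_nonneg hs.le (hu.nonneg hs)).lt_or_eq with h | h
    · exact h
    · exfalso
      have h2 : (0:ℝ) < s / 2 := by linarith
      have hmono := hu.psi_mono h2 (by linarith : s / 2 ≤ s)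
      have hlt : s / 2 * u (s / 2) < K := lt_of_le_of_lt (hmono.trans_eq h.symm) hK0
      have hstrict := hu.psi_strictMono h2 (by linarith : s / 2 < s) hlt
      have hnn : 0 ≤ s / 2 * u (s / 2) := mul_nonneg h2.le (hu.nonneg h2)
      rw [← h] at hstrict
      linarith
  -- Gram matrix
  have hG : (∑ i : Fin n, Matrix.vecMulVec (X i - t) (X i - t)).PosDef :=
    BreakAux.gram_posdef hp0 hpn t X hX
  obtain ⟨c, hc0, hcmin⟩ := BreakAux.gram_exists_min _ hG θ hθ
  set B : ℝ := ∑ i : Fin n, sqDist t (X i) with hBdef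
  have hBi : ∀ i : Fin n, (X i - t) ⬝ᵥ (X i - t) ≤ B := by
    intro i
    exact Finset.single_le_sum (f := fun j => sqDist t (X j))
      (fun j _ => BreakAux.dot_self_nonneg _) (Finset.mem_univ i)
  have hB0 : 0 < B :=
    lt_of_lt_of_le (BreakAux.dot_self_pos (hXne ⟨0, hn0⟩)) (hBi ⟨0, hn0⟩)
  have hC0 : 0 < C := by
    obtain ⟨V, ⟨hVpd, _⟩, hVtr⟩ := hC 1 one_pos
    have h1 := BreakAux.trace_pos' hp0 hVpd
    have h2 := BreakAux.trace_pos' hp0 hVpd.inv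
    linarith
  have hCB : 0 < C * B := mul_pos hC0 hB0
  have huCB : 0 < u (C * B) := by
    have h := psi_pos _ hCB
    nlinarith [hCB]
  have hN0 : (0:ℝ) < (n:ℝ) + m := by
    have : (0:ℝ) ≤ n := Nat.cast_nonneg n
    linarith
  have hNK : (n:ℝ) + m ≤ K * m := by
    rw [div_le_div_iff₀ hK0 hN0] at heps
    linarith
  set δ : ℝ := u (C * B) * c / C with hδdef
  have hδ0 : 0 < δ := by positivity
  have hlt : ((n:ℝ) + m - δ) / m < K := by
    rw [div_lt_iff₀ hm0]
    linarith
  obtain ⟨y, hymem, hy, _⟩ := hu.psi_lub.exists_between hlt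
  obtain ⟨s₀, hs₀, rfl⟩ := hymem
  have hms₀ : (n:ℝ) + m - δ < m * (s₀ * u s₀) := by
    rw [div_lt_iff₀ hm0] at hy
    linarith
  -- the breaking radius
  set r : ℝ := Real.sqrt (C * s₀) + 1 with hrdef
  have hr0 : 0 < r := by positivity
  obtain ⟨V, ⟨hVpd, hfix⟩, hVtr⟩ := hC r hr0
  have hVipd : (V⁻¹).PosDef := hVpd.inv
  have htrV : 0 < V.trace := BreakAux.trace_pos' hp0 hVpd
  have htrVi : 0 < (V⁻¹).trace := BreakAux.trace_pos' hp0 hVipd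
  have htrVC : V.trace ≤ C := by linarith
  have htrViC : (V⁻¹).trace ≤ C := by linarith
  have hdet : IsUnit V.det := isUnit_iff_ne_zero.mpr hVpd.det_pos.ne'
  set w : Fin p → ℝ := V⁻¹ *ᵥ θ with hwdef
  have hVw : V *ᵥ w = θ := by
    rw [hwdef, Matrix.mulVec_mulVec, Matrix.mul_nonsing_inv V hdet, Matrix.one_mulVec]
  set q : ℝ := θ ⬝ᵥ w with hqdef
  have hq0 : 0 < q := by
    have h := hVipd.dotProduct_mulVec_pos hθ0
    rw [star_trivial] at h
    exact h
  have e1 : w ⬝ᵥ (V *ᵥ w) = q := by rw [hVw, dotProduct_comm]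
  have h1eq : w ⬝ᵥ (V *ᵥ θ) = 1 := by
    rw [BreakAux.dot_mulVec_symm hVpd.1, hVw, hθ]
  have hθVθC : θ ⬝ᵥ (V *ᵥ θ) ≤ C := by
    have h := BreakAux.quad_le_trace hVpd.posSemidef θ
    rw [hθ, mul_one] at h
    linarith
  have hθVθ0 : 0 < θ ⬝ᵥ (V *ᵥ θ) := by
    have h := hVpd.dotProduct_mulVec_pos hθ0
    rwa [star_trivial] at h
  have hqC : 1 ≤ q * C := by
    have hcs := BreakAux.psd_cs hVpd.posSemidef w θ
    rw [h1eq, e1, one_pow] at hcs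
    nlinarith
  have hqinv : C⁻¹ ≤ q := by
    have h := mul_le_mul_of_nonneg_left hqC (inv_nonneg.mpr hC0.le)
    rw [mul_one] at h
    calc C⁻¹ ≤ C⁻¹ * (q * C) := h
      _ = q := by rw [mul_comm q C, ← mul_assoc, inv_mul_cancel₀ hC0.ne', one_mul]
  set sY : ℝ := r ^ 2 * q with hsYdef
  have hYne : t + r • θ ≠ t := by
    intro h
    have h2 : r • θ = 0 := by
      have h3 := congrArg (fun z => z - t) h
      simpa [add_sub_cancel_left, sub_self] using h3
    rcases smul_eq_zero.mp h2 with h3 | h3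
    · exact hr0.ne' h3
    · exact hθ0 h3
  have hYsub : (t + r • θ) - t = r • θ := add_sub_cancel_left t (r • θ)
  have hsYval : (r • θ) ⬝ᵥ (V⁻¹ *ᵥ (r • θ)) = sY := by
    rw [Matrix.mulVec_smul, smul_dotProduct, dotProduct_smul,
      smul_eq_mul, smul_eq_mul, hsYdef, hqdef, hwdef]
    ring
  have hrθw : (r • θ) ⬝ᵥ w = r * q := by
    rw [smul_dotProduct, smul_eq_mul, hqdef]
  have hkey : q = (((n + m : ℕ) : ℝ))⁻¹ *
      ((∑ i : Fin n, u ((X i - t) ⬝ᵥ (V⁻¹ *ᵥ (X i - t))) * ((X i - t) ⬝ᵥ w) ^ 2)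
        + (m : ℝ) * (u sY * (r * q) ^ 2)) := by
    conv_lhs => rw [← e1]
    conv_lhs => rw [hfix]
    rw [Matrix.smul_mulVec, dotProduct_smul, smul_eq_mul]
    congr 1
    rw [BreakAux.sum_mulVec', BreakAux.dot_sum', Fin.sum_univ_add]
    congr 1
    · refine Finset.sum_congr rfl fun i _ => ?_
      simp only [Fin.append_left]
      rw [if_neg (hXnet i)]
      exact BreakAux.quad_term _ _ _
    · calc ∑ i : Fin m,
          w ⬝ᵥ ((if Fin.append X (fun _ : Fin m => t + r • θ) (Fin.natAdd n i) = t then 0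
            else u ((Fin.append X (fun _ : Fin m => t + r • θ) (Fin.natAdd n i) - t) ⬝ᵥ
              (V⁻¹ *ᵥ (Fin.append X (fun _ : Fin m => t + r • θ) (Fin.natAdd n i) - t))) •
              Matrix.vecMulVec (Fin.append X (fun _ : Fin m => t + r • θ) (Fin.natAdd n i) - t)
                (Fin.append X (fun _ : Fin m => t + r • θ) (Fin.natAdd n i) - t)) *ᵥ w)
          = ∑ _i : Fin m, u sY * (r * q) ^ 2 := by
            refine Finset.sum_congr rfl fun i _ => ?_
            simp only [Fin.append_right]
            rw [if_neg hYne, hYsub, BreakAux.quad_term, hsYval, hrθw]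
        _ = (m : ℝ) * (u sY * (r * q) ^ 2) := by
            rw [Finset.sum_const, Finset.card_univ, Fintype.card_fin, nsmul_eq_mul]
  set A : ℝ := ∑ i : Fin n, u ((X i - t) ⬝ᵥ (V⁻¹ *ᵥ (X i - t))) * ((X i - t) ⬝ᵥ w) ^ 2
    with hAdef
  have hNne : (((n + m : ℕ) : ℝ)) ≠ 0 := by
    push_cast
    linarith
  have hexpand : (m : ℝ) * (u sY * (r * q) ^ 2) = (m : ℝ) * (sY * u sY) * q := by
    rw [hsYdef]
    ring
  have hNq : (((n + m : ℕ) : ℝ)) * q = A + (m : ℝ) * (sY * u sY) * q := by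
    have h2 : (((n + m : ℕ) : ℝ)) * q = (((n + m : ℕ) : ℝ)) *
        (((((n + m : ℕ) : ℝ)))⁻¹ *
          ((∑ i : Fin n, u ((X i - t) ⬝ᵥ (V⁻¹ *ᵥ (X i - t))) * ((X i - t) ⬝ᵥ w) ^ 2)
            + (m : ℝ) * (u sY * (r * q) ^ 2))) := by rw [← hkey]
    rw [← mul_assoc, mul_inv_cancel₀ hNne, one_mul] at h2
    rw [hexpand] at h2
    exact h2
  -- lower bound for A
  have hsile : ∀ i : Fin n, (X i - t) ⬝ᵥ (V⁻¹ *ᵥ (X i - t)) ≤ C * B := by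
    intro i
    calc (X i - t) ⬝ᵥ (V⁻¹ *ᵥ (X i - t)) ≤ (V⁻¹).trace * ((X i - t) ⬝ᵥ (X i - t)) :=
        BreakAux.quad_le_trace hVipd.posSemidef _
      _ ≤ C * B :=
        mul_le_mul htrViC (hBi i) (BreakAux.dot_self_nonneg _) hC0.le
  have hsipos : ∀ i : Fin n, 0 < (X i - t) ⬝ᵥ (V⁻¹ *ᵥ (X i - t)) := by
    intro i
    have h := hVipd.dotProduct_mulVec_pos (hXne i)
    rwa [star_trivial] at h
  have hAlow : u (C * B) * (c * q ^ 2) ≤ A := by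
    have h1 : q ^ 2 ≤ w ⬝ᵥ w := by
      have h := BreakAux.dot_sq_le θ w
      rw [hθ, one_mul] at h
      rw [hqdef]
      exact h
    have h2 : c * (w ⬝ᵥ w) ≤ w ⬝ᵥ ((∑ i : Fin n, Matrix.vecMulVec (X i - t) (X i - t)) *ᵥ w) :=
      hcmin w
    have h3 : w ⬝ᵥ ((∑ i : Fin n, Matrix.vecMulVec (X i - t) (X i - t)) *ᵥ w)
        = ∑ i : Fin n, ((X i - t) ⬝ᵥ w) ^ 2 := BreakAux.gram_quad _ _
    rw [h3] at h2
    have hc2 : c * q ^ 2 ≤ ∑ i : Fin n, ((X i - t) ⬝ᵥ w) ^ 2 :=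
      le_trans (mul_le_mul_of_nonneg_left h1 hc0.le) h2
    calc u (C * B) * (c * q ^ 2) ≤ u (C * B) * ∑ i : Fin n, ((X i - t) ⬝ᵥ w) ^ 2 :=
        mul_le_mul_of_nonneg_left hc2 huCB.le
      _ = ∑ i : Fin n, u (C * B) * ((X i - t) ⬝ᵥ w) ^ 2 := by rw [Finset.mul_sum]
      _ ≤ A := by
        rw [hAdef]
        exact Finset.sum_le_sum fun i _ =>
          mul_le_mul_of_nonneg_right (hu.antitone (hsipos i) (hsile i)) (sq_nonneg _)
  -- combine
  have h5 : (u (C * B) * c * q) * q ≤ ((((n + m : ℕ) : ℝ)) - (m : ℝ) * (sY * u sY)) * q := by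
    calc (u (C * B) * c * q) * q = u (C * B) * (c * q ^ 2) := by ring
      _ ≤ A := hAlow
      _ = ((((n + m : ℕ) : ℝ)) - (m : ℝ) * (sY * u sY)) * q := by linear_combination -hNq
  have hstep : u (C * B) * c * q ≤ (((n + m : ℕ) : ℝ)) - (m : ℝ) * (sY * u sY) :=
    le_of_mul_le_mul_right h5 hq0
  have hstep2 : δ ≤ u (C * B) * c * q := by
    rw [hδdef, div_eq_mul_inv]
    exact mul_le_mul_of_nonneg_left hqinv (mul_nonneg huCB.le hc0.le)
  have hψr : (m : ℝ) * (sY * u sY) ≤ (n:ℝ) + m - δ := by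
    push_cast at hstep
    linarith [hstep2]
  -- sY ≥ s₀
  have hrsq : C * s₀ ≤ r ^ 2 := by
    rw [hrdef]
    have h := Real.sq_sqrt (mul_nonneg hC0.le hs₀.le)
    have hexp : (Real.sqrt (C * s₀) + 1) ^ 2 = C * s₀ + 2 * Real.sqrt (C * s₀) + 1 := by
      rw [add_sq, h]; ring
    rw [hexp]
    linarith [Real.sqrt_nonneg (C * s₀)]
  have hsYge : s₀ ≤ sY := by
    rw [hsYdef]
    calc s₀ = (C * s₀) * C⁻¹ := by
          field_simp
      _ ≤ r ^ 2 * C⁻¹ := mul_le_mul_of_nonneg_right hrsq (inv_nonneg.mpr hC0.le)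
      _ ≤ r ^ 2 * q := mul_le_mul_of_nonneg_left hqinv (sq_nonneg r)
  have hmono := hu.psi_mono hs₀ hsYge
  have h6 : (m : ℝ) * (s₀ * u s₀) ≤ (m : ℝ) * (sY * u sY) :=
    mul_le_mul_of_nonneg_left hmono hm0.le
  linarith [hms₀, hψr, h6]
end
end

section
/- Suppose u satisfies Condition 2.1 with constant K and let r > 0. Then there exists a constant c > 0, depending only on X, u, m and r, such that for every Y ∈ C_{2,r,m}(X) and every M-estimate of scatter V for Z = X ∪ Y about t, trace(V) ≥ c. -/
open Matrix Finset Filter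

noncomputable section

section helpers
variable {p : ℕ}

lemma my_transpose_eq {V : Matrix (Fin p) (Fin p) ℝ} (hV : V.IsHermitian) : Vᵀ = V := by
  rwa [Matrix.IsHermitian, conjTranspose_eq_transpose_of_trivial] at hV

lemma my_dot_symm {V : Matrix (Fin p) (Fin p) ℝ} (hV : V.IsHermitian) (x y : Fin p → ℝ) :
    y ⬝ᵥ (V *ᵥ x) = x ⬝ᵥ (V *ᵥ y) := by
  rw [dotProduct_mulVec, ← mulVec_transpose, my_transpose_eq hV, dotProduct_comm]

lemma my_cs_psd {V : Matrix (Fin p) (Fin p) ℝ} (hV : V.PosSemidef) (x y : Fin p → ℝ) :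
    (x ⬝ᵥ (V *ᵥ y))^2 ≤ (x ⬝ᵥ (V *ᵥ x)) * (y ⬝ᵥ (V *ᵥ y)) := by
  have key : ∀ s : ℝ, 0 ≤ (y ⬝ᵥ (V *ᵥ y)) * (s * s) + (2 * (x ⬝ᵥ (V *ᵥ y))) * s
      + (x ⬝ᵥ (V *ᵥ x)) := by
    intro s
    have h0 := hV.dotProduct_mulVec_nonneg (x + s • y)
    simp only [star_trivial] at h0
    have expand : (x + s • y) ⬝ᵥ (V *ᵥ (x + s • y)) =
        (y ⬝ᵥ (V *ᵥ y)) * (s * s) + (2 * (x ⬝ᵥ (V *ᵥ y))) * s + (x ⬝ᵥ (V *ᵥ x)) := by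
      rw [mulVec_add, mulVec_smul, add_dotProduct, smul_dotProduct, dotProduct_add,
        dotProduct_add, dotProduct_smul, dotProduct_smul, my_dot_symm hV.1 x y]
      simp only [smul_eq_mul]; ring
    rw [expand] at h0
    exact h0
  have hd := discrim_le_zero key
  rw [discrim] at hd
  nlinarith [hd]

lemma my_trace_mul_vecMulVec (B : Matrix (Fin p) (Fin p) ℝ) (a : Fin p → ℝ) :
    (B * vecMulVec a a).trace = a ⬝ᵥ (B *ᵥ a) := by
  simp [Matrix.trace, Matrix.mul_apply, vecMulVec_apply, dotProduct, mulVec, Matrix.diag,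
    Finset.mul_sum, Finset.sum_mul]
  apply Finset.sum_congr rfl; intro i _
  apply Finset.sum_congr rfl; intro j _
  ring

lemma my_single_dot (V : Matrix (Fin p) (Fin p) ℝ) (j k : Fin p) :
    (Pi.single j (1:ℝ)) ⬝ᵥ (V *ᵥ Pi.single k 1) = V j k := by
  simp [dotProduct, mulVec, Pi.single_apply]

lemma my_entry_le_trace {V : Matrix (Fin p) (Fin p) ℝ} (hV : V.PosSemidef) (j k : Fin p) :
    |V j k| ≤ V.trace := by
  have hsym : V k j = V j k := congrFun (congrFun (my_transpose_eq hV.1) j) k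
  have hdiag : ∀ i, 0 ≤ V i i := by
    intro i
    have := hV.dotProduct_mulVec_nonneg (Pi.single i 1)
    rwa [star_trivial, my_single_dot] at this
  have hdle : ∀ i, V i i ≤ V.trace :=
    fun i => Finset.single_le_sum (fun i _ => hdiag i) (mem_univ i)
  rcases eq_or_ne j k with rfl | hjk
  · rw [abs_of_nonneg (hdiag j)]; exact hdle j
  · have hplus := hV.dotProduct_mulVec_nonneg (Pi.single j 1 + Pi.single k 1)
    have hminus := hV.dotProduct_mulVec_nonneg (Pi.single j 1 - Pi.single k 1)
    rw [star_trivial] at hplus hminus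
    have e1 : (Pi.single j (1:ℝ) + Pi.single k 1) ⬝ᵥ (V *ᵥ (Pi.single j 1 + Pi.single k 1))
        = V j j + V j k + V k j + V k k := by
      rw [mulVec_add, dotProduct_add, add_dotProduct, add_dotProduct,
        my_single_dot, my_single_dot, my_single_dot, my_single_dot]
      ring
    have e2 : (Pi.single j (1:ℝ) - Pi.single k 1) ⬝ᵥ (V *ᵥ (Pi.single j 1 - Pi.single k 1))
        = V j j - V j k - V k j + V k k := by
      rw [mulVec_sub, dotProduct_sub, sub_dotProduct, sub_dotProduct,
        my_single_dot, my_single_dot, my_single_dot, my_single_dot]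
      ring
    rw [e1] at hplus; rw [e2] at hminus
    have h1 := hdle j; have h2 := hdle k
    rw [abs_le]
    constructor <;> nlinarith [hsym]

lemma my_quad_le_trace {V : Matrix (Fin p) (Fin p) ℝ} (hV : V.PosSemidef) (d : Fin p → ℝ) :
    d ⬝ᵥ (V *ᵥ d) ≤ (p : ℝ) * V.trace * (d ⬝ᵥ d) := by
  have h1 : d ⬝ᵥ (V *ᵥ d) ≤ V.trace * (∑ j, |d j|)^2 := by
    have e : d ⬝ᵥ (V *ᵥ d) = ∑ j, ∑ k, V j k * d j * d k := by
      simp [dotProduct, mulVec, Finset.mul_sum]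
      apply Finset.sum_congr rfl; intro i _
      apply Finset.sum_congr rfl; intro j _
      ring
    rw [e]
    have e2 : V.trace * (∑ j, |d j|)^2 = ∑ j, ∑ k, V.trace * (|d j| * |d k|) := by
      rw [sq, Finset.sum_mul_sum]
      simp [Finset.mul_sum]
    rw [e2]
    apply Finset.sum_le_sum; intro j _
    apply Finset.sum_le_sum; intro k _
    calc V j k * d j * d k ≤ |V j k * d j * d k| := le_abs_self _
      _ = |V j k| * (|d j| * |d k|) := by rw [abs_mul, abs_mul, mul_assoc]
      _ ≤ V.trace * (|d j| * |d k|) := by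
          apply mul_le_mul_of_nonneg_right (my_entry_le_trace hV j k)
          positivity
  have h2 : (∑ j, |d j|)^2 ≤ (p : ℝ) * (d ⬝ᵥ d) := by
    have := sq_sum_le_card_mul_sum_sq (s := (univ : Finset (Fin p))) (f := fun j => |d j|)
    simp only [Finset.card_univ, Fintype.card_fin] at this
    calc (∑ j, |d j|)^2 ≤ (p : ℝ) * ∑ j, |d j|^2 := by exact_mod_cast this
      _ = (p : ℝ) * (d ⬝ᵥ d) := by simp [dotProduct, sq_abs, sq]
  have htr : 0 ≤ V.trace := by
    apply Finset.sum_nonneg; intro i _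
    have := hV.dotProduct_mulVec_nonneg (Pi.single i 1)
    rwa [star_trivial, my_single_dot] at this
  calc d ⬝ᵥ (V *ᵥ d) ≤ V.trace * (∑ j, |d j|)^2 := h1
    _ ≤ V.trace * ((p : ℝ) * (d ⬝ᵥ d)) := mul_le_mul_of_nonneg_left h2 htr
    _ = (p : ℝ) * V.trace * (d ⬝ᵥ d) := by ring
end helpers

/-- Lemma 4.1.iii: for any `m`, `trace(V)` is bounded away from zero uniformly over all
`Y ∈ C_{2,r,m}(X)` and all M-estimates `V` for `X ∪ Y`. -/


theorem statement12 (p n m : ℕ) (hp : 1 ≤ p) (hm : 1 ≤ m) (hn : p * (p - 1) < n)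
    (t : Fin p → ℝ) (u : ℝ → ℝ) (K : ℝ) (hu : Cond21 p u K)
    (X : Fin n → Fin p → ℝ) (hX : GenPosAbout t X)
    (r : ℝ) (hr : 0 < r) :
    ∃ c : ℝ, 0 < c ∧ ∀ Y : Fin m → Fin p → ℝ, InC2 r t Y →
      ∀ V : Matrix (Fin p) (Fin p) ℝ,
        IsScatterMEstimate u t (Fin.append X Y) V → c ≤ V.trace := by
  classical
  have hp0 : 0 < p := hp
  have hpn : p ≤ n := by
    rcases eq_or_lt_of_le hp with h1 | h1
    · rw [← h1] at hn; omega
    · exact le_of_lt (lt_of_le_of_lt (Nat.le_mul_of_pos_right p (by omega)) hn)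
  have hn0 : 0 < n := lt_of_le_of_lt (Nat.zero_le _) hn
  haveI : Nonempty (Fin n) := ⟨⟨0, hn0⟩⟩
  -- every x i differs from t
  have hxnet : ∀ i : Fin n, X i - t ≠ 0 := by
    intro i hzero
    set f : Fin p → Fin n := (Equiv.swap (Fin.castLE hpn ⟨0, hp0⟩) i) ∘ (Fin.castLE hpn) with hf
    have hfinj : Function.Injective f :=
      (Equiv.swap _ _).injective.comp (Fin.castLE_injective hpn)
    have hli := hX f hfinj
    have hf0 : f ⟨0, hp0⟩ = i := by
      simp [hf, Equiv.swap_apply_left]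
    exact hli.ne_zero ⟨0, hp0⟩ (by rw [hf0]; exact hzero)
  -- minimal squared distance of X from t
  set δX : ℝ := (univ : Finset (Fin n)).inf' univ_nonempty (fun i => sqDist t (X i)) with hδX
  have hδXpos : 0 < δX := by
    rw [hδX, Finset.lt_inf'_iff]
    intro i _
    have hnn : 0 ≤ (X i - t) ⬝ᵥ (X i - t) := by
      apply Finset.sum_nonneg; intro j _; exact mul_self_nonneg _
    rcases hnn.lt_or_eq with h | h
    · exact h
    · exact absurd ((dotProduct_self_eq_zero).1 h.symm) (hxnet i)
  set δ : ℝ := min δX r with hδ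
  have hδpos : 0 < δ := lt_min hδXpos hr
  -- choose s₀ with ψ(s₀) > p
  obtain ⟨y₀, hy₀mem, hy₀gt⟩ : ∃ y ∈ {y : ℝ | ∃ s : ℝ, 0 < s ∧ y = s * u s}, (p : ℝ) < y := by
    by_contra hcon
    push_neg at hcon
    exact absurd (hu.psi_lub.2 hcon) (not_le.2 hu.K_gt_p)
  obtain ⟨s₀, hs₀pos, rfl⟩ := hy₀mem
  have hps₀ : (0:ℝ) < (p : ℝ) * s₀ := by positivity
  refine ⟨δ / ((p : ℝ) * s₀), by positivity, ?_⟩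
  intro Y hY V hV
  obtain ⟨hVpd, hVeq⟩ := hV
  by_contra hc
  push_neg at hc
  set c : ℝ := δ / ((p : ℝ) * s₀) with hcdef
  have hcps : c * ((p : ℝ) * s₀) = δ := by
    rw [hcdef]; field_simp
  set z : Fin (n + m) → Fin p → ℝ := Fin.append X Y with hz
  -- lower bound on squared distances
  have hkey : ∀ i : Fin (n + m), δ ≤ (z i - t) ⬝ᵥ (z i - t) := by
    intro i
    refine Fin.addCases (fun i => ?_) (fun j => ?_) i
    · rw [hz, Fin.append_left]
      exact le_trans (min_le_left _ _) (Finset.inf'_le _ (mem_univ i))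
    · rw [hz, Fin.append_right]
      exact le_trans (min_le_right _ _) (hY j).le
  have hznet : ∀ i : Fin (n + m), z i - t ≠ 0 := by
    intro i h0
    have := hkey i
    rw [h0] at this
    simp at this
    linarith
  set s : Fin (n + m) → ℝ := fun i => (z i - t) ⬝ᵥ (V⁻¹ *ᵥ (z i - t)) with hs
  have hs_pos : ∀ i, 0 < s i := by
    intro i
    have := (hVpd.inv).dotProduct_mulVec_pos (hznet i)
    simpa [hs, star_trivial] using this
  -- the fixed-point equation without the `if`
  have hVeq' : V = ((n + m : ℕ) : ℝ)⁻¹ • ∑ i : Fin (n + m),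
      u (s i) • Matrix.vecMulVec (z i - t) (z i - t) := by
    rw [hVeq]
    congr 1
    apply Finset.sum_congr rfl
    intro i _
    rw [if_neg (fun h => hznet i (by rw [h]; simp))]
  have hdet : IsUnit V.det := (Matrix.isUnit_iff_isUnit_det V).1 hVpd.isUnit
  have hVinv : V⁻¹ * V = 1 := Matrix.nonsing_inv_mul V hdet
  have hVVinv : V * V⁻¹ = 1 := Matrix.mul_nonsing_inv V hdet
  have hNpos : (0:ℝ) < ((n + m : ℕ) : ℝ) := by positivity
  -- trace identity: p = N⁻¹ Σ ψ(sᵢ)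
  have hiden : ((n + m : ℕ) : ℝ) * (p : ℝ) = ∑ i : Fin (n + m), u (s i) * s i := by
    have h1 : (V⁻¹ * V).trace = (p : ℝ) := by
      rw [hVinv, Matrix.trace_one]
      simp
    have h2 : V⁻¹ * V = ((n + m : ℕ) : ℝ)⁻¹ • ∑ i : Fin (n + m),
        u (s i) • (V⁻¹ * Matrix.vecMulVec (z i - t) (z i - t)) := by
      rw [show V⁻¹ * V = V⁻¹ * (((n + m : ℕ) : ℝ)⁻¹ • ∑ i : Fin (n + m),
        u (s i) • Matrix.vecMulVec (z i - t) (z i - t)) from by rw [← hVeq']]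
      rw [Matrix.mul_smul, Matrix.mul_sum]
      congr 1
      apply Finset.sum_congr rfl
      intro i _
      rw [Matrix.mul_smul]
    have h3 : (V⁻¹ * V).trace = ((n + m : ℕ) : ℝ)⁻¹ * ∑ i : Fin (n + m), u (s i) * s i := by
      rw [h2, Matrix.trace_smul, Matrix.trace_sum]
      simp only [Matrix.trace_smul, my_trace_mul_vecMulVec, smul_eq_mul]
      rfl
    rw [h3] at h1
    field_simp at h1
    push_cast at h1 ⊢
    linarith [h1]
  -- each sᵢ exceeds s₀
  have hsl : ∀ i, s₀ ≤ s i := by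
    intro i
    set d : Fin p → ℝ := z i - t with hd
    have hdd : 0 < d ⬝ᵥ d := lt_of_lt_of_le hδpos (hkey i)
    have c1 : (V⁻¹ *ᵥ d) ⬝ᵥ (V *ᵥ d) = d ⬝ᵥ d := by
      rw [my_dot_symm hVpd.1, mulVec_mulVec, hVVinv, one_mulVec]
    have c2 : (V⁻¹ *ᵥ d) ⬝ᵥ (V *ᵥ (V⁻¹ *ᵥ d)) = s i := by
      rw [mulVec_mulVec, hVVinv, one_mulVec, dotProduct_comm]
    have hcs := my_cs_psd hVpd.posSemidef (V⁻¹ *ᵥ d) d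
    rw [c1, c2] at hcs
    have hq := my_quad_le_trace hVpd.posSemidef d
    have key3 : d ⬝ᵥ d ≤ s i * ((p : ℝ) * V.trace) := by
      nlinarith [hs_pos i, hdd, hcs, hq]
    have h5 : δ ≤ s i * ((p : ℝ) * V.trace) := le_trans (hkey i) key3
    have h6 : s i * ((p : ℝ) * V.trace) < s i * ((p : ℝ) * c) := by
      apply mul_lt_mul_of_pos_left _ (hs_pos i)
      exact mul_lt_mul_of_pos_left hc (by positivity)
    have h7 : δ < s i * ((p : ℝ) * c) := lt_of_le_of_lt h5 h6
    nlinarith [hδpos, hs₀pos, hcps, h7]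
  have hpsil : ∀ i, (p : ℝ) < u (s i) * s i := by
    intro i
    have := hu.psi_mono hs₀pos (hsl i)
    calc (p : ℝ) < s₀ * u s₀ := hy₀gt
      _ ≤ s i * u (s i) := this
      _ = u (s i) * s i := mul_comm _ _
  haveI : Nonempty (Fin (n + m)) := ⟨⟨0, by omega⟩⟩
  have hsum : ((n + m : ℕ) : ℝ) * (p : ℝ) < ∑ i : Fin (n + m), u (s i) * s i := by
    calc ((n + m : ℕ) : ℝ) * (p : ℝ) = ∑ _i : Fin (n + m), (p : ℝ) := by
          simp [Finset.sum_const, Finset.card_univ, mul_comm]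
      _ < ∑ i : Fin (n + m), u (s i) * s i :=
          Finset.sum_lt_sum_of_nonempty univ_nonempty (fun i _ => hpsil i)
  push_cast at hiden hsum
  linarith [hiden, hsum]
end
end

section
/- (Theorem 4.1.i, upper bound: breakdown by distant non-coplanar outliers.) Suppose u satisfies Condition 2.1 with constant K and ε_m = m/(n+m) > p/K. Let θ_1,…,θ_m be unit vectors in ℝ^p such that for every R > 0 the list X ∪ (t + Rθ_1, …, t + Rθ_m) is in general position about t. Then there is no constant C < ∞ such that for every R > 0 an M-estimate of scatter V_R for X ∪ (t + Rθ_1, …, t + Rθ_m) about t exists with trace(V_R) + trace(V_R⁻¹) ≤ C. -/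
open Matrix Finset Filter

noncomputable section

section Aux

variable {q : ℕ}

lemma aux_dot_sq_le (x y : Fin q → ℝ) : (x ⬝ᵥ y) ^ 2 ≤ (x ⬝ᵥ x) * (y ⬝ᵥ y) := by
  simpa [dotProduct, pow_two] using Finset.sum_mul_sq_le_sq_mul_sq Finset.univ x y

lemma aux_dot_symm {M : Matrix (Fin q) (Fin q) ℝ} (h : Mᵀ = M) (x y : Fin q → ℝ) :
    x ⬝ᵥ (M *ᵥ y) = (M *ᵥ x) ⬝ᵥ y := by
  rw [dotProduct_mulVec, ← Matrix.mulVec_transpose, h]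

lemma aux_trace_vecMulVec_mul (a b : Fin q → ℝ) (M : Matrix (Fin q) (Fin q) ℝ) :
    (Matrix.vecMulVec a b * M).trace = b ⬝ᵥ (M *ᵥ a) := by
  simp only [Matrix.trace, Matrix.diag, Matrix.mul_apply, Matrix.vecMulVec_apply,
    dotProduct, Matrix.mulVec]
  rw [Finset.sum_comm]
  exact Finset.sum_congr rfl fun j _ => by rw [Finset.mul_sum]; exact Finset.sum_congr rfl fun i _ => by ring

lemma aux_trace_pos {V : Matrix (Fin q) (Fin q) ℝ} (hq : 0 < q) (hV : V.PosDef) :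
    0 < V.trace := by
  have h : ∀ i, 0 < V i i := by
    intro i
    have h0 : (Pi.single i 1 : Fin q → ℝ) ≠ 0 := by
      intro h
      have := congrFun h i
      simp at this
    have := hV.dotProduct_mulVec_pos h0
    simpa [dotProduct, Matrix.mulVec, Pi.single_apply] using this
  exact Finset.sum_pos (fun i _ => h i) (by simpa [Finset.univ_nonempty_iff] using Fin.pos_iff_nonempty.mp hq)

lemma aux_quad_le_trace {V : Matrix (Fin q) (Fin q) ℝ} (hV : V.PosSemidef)
    {v : Fin q → ℝ} (hv : v ⬝ᵥ v = 1) : v ⬝ᵥ (V *ᵥ v) ≤ V.trace := by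
  classical
  obtain ⟨A, hAA, hAT⟩ : ∃ A : Matrix (Fin q) (Fin q) ℝ, A * A = V ∧ Aᵀ = A := by
    open scoped MatrixOrder in
    · refine ⟨CFC.sqrt V, CFC.sqrt_mul_sqrt_self V hV.nonneg, ?_⟩
      rw [← Matrix.conjTranspose_eq_transpose_of_trivial]
      exact (CFC.sqrt_nonneg V).posSemidef.isHermitian
  have h1 : v ⬝ᵥ (V *ᵥ v) = (A *ᵥ v) ⬝ᵥ (A *ᵥ v) := by
    rw [← hAA, ← Matrix.mulVec_mulVec, aux_dot_symm hAT]
  have h2 : V.trace = ∑ i, ∑ j, A i j ^ 2 := by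
    rw [← hAA]
    simp only [Matrix.trace, Matrix.diag, Matrix.mul_apply]
    refine Finset.sum_congr rfl fun i _ => Finset.sum_congr rfl fun j _ => ?_
    have : A j i = A i j := by conv_lhs => rw [← hAT, Matrix.transpose_apply]
    rw [this, pow_two]
  rw [h1, h2]
  have hv2 : ∑ j, v j ^ 2 = 1 := by simpa [dotProduct, pow_two] using hv
  simp only [dotProduct]
  refine Finset.sum_le_sum fun i _ => ?_
  have := Finset.sum_mul_sq_le_sq_mul_sq Finset.univ (fun j => A i j) v
  calc (A *ᵥ v) i * (A *ᵥ v) i = (∑ j, A i j * v j) ^ 2 := by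
        simp [Matrix.mulVec, dotProduct, pow_two]
    _ ≤ (∑ j, A i j ^ 2) * ∑ j, v j ^ 2 := this
    _ = ∑ j, A i j ^ 2 := by rw [hv2, mul_one]

lemma aux_one_le_quad_mul {V : Matrix (Fin q) (Fin q) ℝ} (hV : V.PosDef)
    {v : Fin q → ℝ} (hv : v ⬝ᵥ v = 1) :
    1 ≤ (v ⬝ᵥ (V *ᵥ v)) * (v ⬝ᵥ (V⁻¹ *ᵥ v)) := by
  classical
  obtain ⟨A, hAA, hAT⟩ : ∃ A : Matrix (Fin q) (Fin q) ℝ, A * A = V ∧ Aᵀ = A := by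
    open scoped MatrixOrder in
    · refine ⟨CFC.sqrt V, CFC.sqrt_mul_sqrt_self V hV.posSemidef.nonneg, ?_⟩
      rw [← Matrix.conjTranspose_eq_transpose_of_trivial]
      exact (CFC.sqrt_nonneg V).posSemidef.isHermitian
  have hdA : IsUnit A.det := by
    refine Ne.isUnit fun h => ?_
    have : V.det = 0 := by rw [← hAA, Matrix.det_mul, h, mul_zero]
    exact hV.det_pos.ne' this
  have hAinvT : (A⁻¹)ᵀ = A⁻¹ := by rw [Matrix.transpose_nonsing_inv, hAT]
  have hinv : V⁻¹ = A⁻¹ * A⁻¹ := by rw [← hAA, Matrix.mul_inv_rev]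
  have hy : v ⬝ᵥ (V *ᵥ v) = (A *ᵥ v) ⬝ᵥ (A *ᵥ v) := by
    rw [← hAA, ← Matrix.mulVec_mulVec, aux_dot_symm hAT]
  have hx : v ⬝ᵥ (V⁻¹ *ᵥ v) = (A⁻¹ *ᵥ v) ⬝ᵥ (A⁻¹ *ᵥ v) := by
    rw [hinv, ← Matrix.mulVec_mulVec, aux_dot_symm hAinvT]
  have hxy : (A⁻¹ *ᵥ v) ⬝ᵥ (A *ᵥ v) = 1 := by
    rw [← aux_dot_symm hAinvT, Matrix.mulVec_mulVec, Matrix.nonsing_inv_mul A hdA,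
      Matrix.one_mulVec, hv]
  have := aux_dot_sq_le (A⁻¹ *ᵥ v) (A *ᵥ v)
  rw [hxy] at this
  rw [hy, hx]
  calc (1:ℝ) = 1 ^ 2 := by norm_num
    _ ≤ ((A⁻¹ *ᵥ v) ⬝ᵥ (A⁻¹ *ᵥ v)) * ((A *ᵥ v) ⬝ᵥ (A *ᵥ v)) := this
    _ = _ := by ring

end Aux

set_option maxHeartbeats 1000000 in
/-- Theorem 4.1.i (upper bound: breakdown by distant non-coplanar outliers): if
`ε_m = m/(n+m) > p/K` and `θ₁,…,θ_m` are unit vectors such that for every `R > 0` the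
list `X ∪ (t + Rθ₁, …, t + Rθ_m)` is in general position about `t`, then there is no
constant `C` such that for every `R > 0` an M-estimate `V_R` for this contaminated
sample about `t` exists with `trace(V_R) + trace(V_R⁻¹) ≤ C`. -/
theorem statement16 (p n m : ℕ) (hp : 1 ≤ p) (hm : 1 ≤ m) (hn : p * (p - 1) < n)
    (t : Fin p → ℝ) (u : ℝ → ℝ) (K : ℝ) (hu : Cond21 p u K)
    (X : Fin n → Fin p → ℝ) (hX : GenPosAbout t X)
    (θ : Fin m → Fin p → ℝ) (hθ : ∀ i : Fin m, θ i ⬝ᵥ θ i = 1)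
    (hgen : ∀ R : ℝ, 0 < R →
      GenPosAbout t (Fin.append X (fun i : Fin m => t + R • θ i)))
    (heps : (p : ℝ) / K < (m : ℝ) / ((n : ℝ) + m)) :
    ¬ ∃ C : ℝ, ∀ R : ℝ, 0 < R →
      ∃ V : Matrix (Fin p) (Fin p) ℝ,
        IsScatterMEstimate u t (Fin.append X (fun i : Fin m => t + R • θ i)) V ∧
        V.trace + (V⁻¹).trace ≤ C := by
  rintro ⟨C, hC⟩
  classical
  -- basic positivity facts
  have hNpos : (0:ℝ) < (n + m : ℕ) := by
    have : 0 < m := hm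
    positivity
  have hK0 : (0:ℝ) < K := lt_of_le_of_lt (Nat.cast_nonneg p) hu.K_gt_p
  have hm0 : (0:ℝ) < (m:ℝ) := by exact_mod_cast hm
  have hnm0 : (0:ℝ) < (n:ℝ) + (m:ℝ) := by positivity
  -- C is positive
  have hCpos : 0 < C := by
    obtain ⟨V₁, hV₁, hC₁⟩ := hC 1 one_pos
    have h1 := aux_trace_pos hp hV₁.1
    have h2 := aux_trace_pos hp hV₁.1.inv
    linarith
  -- choose s₀ with ψ(s₀) > p(n+m)/m
  set c : ℝ := (p : ℝ) * ((n:ℝ) + m) / m with hc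
  have hcK : c < K := by
    rw [div_lt_div_iff₀ hK0 hnm0] at heps
    rw [hc, div_lt_iff₀ hm0]
    nlinarith
  obtain ⟨s₀, hs₀pos, hs₀⟩ : ∃ s : ℝ, 0 < s ∧ c < s * u s := by
    by_contra h
    push_neg at h
    have : K ≤ c := hu.psi_lub.2 (fun y hy => by
      obtain ⟨s, hs, rfl⟩ := hy
      exact h s hs)
    linarith
  -- choose R
  set R : ℝ := Real.sqrt (s₀ * C) + 1 with hRdef
  have hRpos : 0 < R := by positivity
  have hR2 : s₀ * C < R ^ 2 := by
    have h0 : 0 ≤ s₀ * C := le_of_lt (mul_pos hs₀pos hCpos)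
    have h1 := Real.sq_sqrt h0
    have h2 := Real.sqrt_nonneg (s₀ * C)
    nlinarith
  obtain ⟨V, hV, hVC⟩ := hC R hRpos
  set z : Fin (n + m) → Fin p → ℝ := Fin.append X (fun i : Fin m => t + R • θ i) with hz
  have hVpd : V.PosDef := hV.1
  have hVinv : V⁻¹.PosDef := hVpd.inv
  have htrV : 0 < V.trace := aux_trace_pos hp hVpd
  have htrVinv : 0 < V⁻¹.trace := aux_trace_pos hp hVinv
  have htrVC : V.trace ≤ C := by linarith
  -- the quadratic form values
  set sval : Fin (n + m) → ℝ := fun i => (z i - t) ⬝ᵥ (V⁻¹ *ᵥ (z i - t)) with hsval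
  set w : Fin (n + m) → ℝ := fun i => if z i = t then 0 else sval i * u (sval i) with hw
  -- the trace identity: p = N⁻¹ * ∑ w
  have hdet : IsUnit V.det := hVpd.det_pos.ne'.isUnit
  have hkey : (p : ℝ) = ((n + m : ℕ) : ℝ)⁻¹ * ∑ i, w i := by
    have h1 : (V * V⁻¹).trace = (p : ℝ) := by
      rw [Matrix.mul_nonsing_inv _ hdet, Matrix.trace_one]
      simp
    calc (p : ℝ) = (V * V⁻¹).trace := h1.symm
      _ = ((((n + m : ℕ) : ℝ)⁻¹ • ∑ i : Fin (n + m),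
            if z i = t then (0 : Matrix (Fin p) (Fin p) ℝ)
            else u ((z i - t) ⬝ᵥ (V⁻¹ *ᵥ (z i - t))) •
              Matrix.vecMulVec (z i - t) (z i - t)) * V⁻¹).trace :=
          congrArg Matrix.trace (congrArg (· * V⁻¹) hV.2)
      _ = ((n + m : ℕ) : ℝ)⁻¹ * ∑ i, w i := by
          rw [Matrix.smul_mul, Matrix.trace_smul, Finset.sum_mul, Matrix.trace_sum,
            smul_eq_mul]
          congr 1
          refine Finset.sum_congr rfl fun i _ => ?_
          by_cases h : z i = t
          · simp [hw, h]
          · rw [hw]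
            simp only [h, if_false]
            rw [Matrix.smul_mul, Matrix.trace_smul, aux_trace_vecMulVec_mul, smul_eq_mul]
            rw [hsval]
            ring
  -- lower bounds on the summands
  have hXpart : ∀ i : Fin n, 0 ≤ w (Fin.castAdd m i) := by
    intro i
    by_cases h : z (Fin.castAdd m i) = t
    · simp only [hw]
      rw [if_pos h]
    · have hne : z (Fin.castAdd m i) - t ≠ 0 := sub_ne_zero.mpr h
      have hpos : 0 < sval (Fin.castAdd m i) := by
        have h2 := hVinv.dotProduct_mulVec_pos hne
        simp only [star_trivial] at h2
        exact h2
      have hu0 : 0 ≤ u (sval (Fin.castAdd m i)) := hu.nonneg hpos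
      simp only [hw]
      rw [if_neg h]
      exact mul_nonneg hpos.le hu0
  have hYpart : ∀ i : Fin m, c < w (Fin.natAdd n i) := by
    intro i
    have hθne : θ i ≠ 0 := by
      intro h
      have := hθ i
      rw [h] at this
      simp at this
    have hzi : z (Fin.natAdd n i) = t + R • θ i := by
      rw [hz, Fin.append_right]
    have hznet : z (Fin.natAdd n i) ≠ t := by
      rw [hzi]
      intro h
      have : R • θ i = 0 := by
        have := congrArg (fun v => v - t) h
        simpa using this
      exact (smul_ne_zero hRpos.ne' hθne) this
    have hdiff : z (Fin.natAdd n i) - t = R • θ i := by rw [hzi]; abel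
    -- sval = R^2 * (θ ⬝ᵥ V⁻¹θ)
    have hsv : sval (Fin.natAdd n i) = R ^ 2 * (θ i ⬝ᵥ (V⁻¹ *ᵥ θ i)) := by
      rw [hsval]
      simp only [hdiff, Matrix.mulVec_smul, smul_dotProduct, dotProduct_smul, smul_eq_mul]
      ring
    -- lower bound on θ ⬝ᵥ V⁻¹θ
    have hq1 : 1 ≤ (θ i ⬝ᵥ (V *ᵥ θ i)) * (θ i ⬝ᵥ (V⁻¹ *ᵥ θ i)) :=
      aux_one_le_quad_mul hVpd (hθ i)
    have hq2 : θ i ⬝ᵥ (V *ᵥ θ i) ≤ C :=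
      le_trans (aux_quad_le_trace hVpd.posSemidef (hθ i)) htrVC
    have hq3 : 0 < θ i ⬝ᵥ (V *ᵥ θ i) := by
      have h3 := hVpd.dotProduct_mulVec_pos hθne
      simpa only [star_trivial] using h3
    have hq4 : 0 < θ i ⬝ᵥ (V⁻¹ *ᵥ θ i) := by
      have h4 := hVinv.dotProduct_mulVec_pos hθne
      simpa only [star_trivial] using h4
    have hCq : 1 ≤ C * (θ i ⬝ᵥ (V⁻¹ *ᵥ θ i)) := by nlinarith
    have hslb : s₀ < sval (Fin.natAdd n i) := by
      rw [hsv]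
      nlinarith
    have hψ : c < sval (Fin.natAdd n i) * u (sval (Fin.natAdd n i)) :=
      lt_of_lt_of_le hs₀ (hu.psi_mono hs₀pos hslb.le)
    simp only [hw]
    rw [if_neg hznet]
    exact hψ
  -- combine
  have hsum : (p : ℝ) * ((n:ℝ) + m) < ∑ i, w i := by
    rw [Fin.sum_univ_add]
    have h1 : (0:ℝ) ≤ ∑ i : Fin n, w (Fin.castAdd m i) :=
      Finset.sum_nonneg fun i _ => hXpart i
    have h2 : (m : ℝ) * c < ∑ i : Fin m, w (Fin.natAdd n i) := by
      haveI : Nonempty (Fin m) := Fin.pos_iff_nonempty.mp hm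
      have hlt := Finset.sum_lt_sum_of_nonempty
        (s := (Finset.univ : Finset (Fin m))) Finset.univ_nonempty
        (f := fun _ => c) (fun i _ => hYpart i)
      calc (m : ℝ) * c = ∑ _i : Fin m, c := by
            rw [Finset.sum_const, Finset.card_univ, Fintype.card_fin, nsmul_eq_mul]
        _ < _ := hlt
    have hmc : (m : ℝ) * c = (p : ℝ) * ((n:ℝ) + m) := by
      rw [hc]
      field_simp
    linarith
  have hcast : ((n + m : ℕ) : ℝ) = (n:ℝ) + m := by push_cast; ring
  rw [hcast] at hkey
  have hSw : ∑ i, w i = (p:ℝ) * ((n:ℝ) + m) := by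
    have hne : (n:ℝ) + m ≠ 0 := ne_of_gt hnm0
    field_simp at hkey
    linarith
  rw [hSw] at hsum
  exact lt_irrefl _ hsum
end
end
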